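/- For ς ∈ ℝ, consider the linear Legendre map of two-dimensional Lepage–Dedecker Maxwell theory sending (v₁₁, v₁₂, v₂₁, v₂₂) to (π¹¹, π¹², π²¹, π²²) := (−ς·v₂₂, v₂₁ − (1−ς)·v₁₂, v₁₂ − (1−ς)·v₂₁, −ς·v₁₁), whose matrix with respect to these orderings is [[0,0,0,−ς],[0,−(1−ς),1,0],[0,1,−(1−ς),0],[−ς,0,0,0]]. The determinant of this matrix equals (2−ς)·ς³; in particular the map is bijective (the Legendre correspondence is non-degenerate) if and only if ς ≠ 0 and ς ≠ 2. -/

import Mathlib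

noncomputable section

/-- The matrix of the linear Legendre map of two-dimensional Lepage–Dedecker Maxwell
theory, sending `(v₁₁, v₁₂, v₂₁, v₂₂)` to `(π¹¹, π¹², π²¹, π²²)`. -/
def legendreMatrix (s : ℝ) : Matrix (Fin 4) (Fin 4) ℝ :=
  !![0, 0, 0, -s;
     0, -(1 - s), 1, 0;
     0, 1, -(1 - s), 0;
     -s, 0, 0, 0]

/-- The determinant of the 2D Maxwell Legendre matrix is `(2−ς)·ς³`; in particular the
Legendre map `(v₁₁,v₁₂,v₂₁,v₂₂) ↦ (−ς·v₂₂, v₂₁−(1−ς)·v₁₂, v₁₂−(1−ς)·v₂₁, −ς·v₁₁)` is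
bijective (the Legendre correspondence is non-degenerate) iff `ς ≠ 0` and `ς ≠ 2`. -/
theorem legendre_determinant (s : ℝ) :
    (legendreMatrix s).det = (2 - s) * s ^ 3 ∧
      (Function.Bijective (fun v : ℝ × ℝ × ℝ × ℝ =>
          ((-s * v.2.2.2, v.2.2.1 - (1 - s) * v.2.1,
            v.2.1 - (1 - s) * v.2.2.1, -s * v.1) : ℝ × ℝ × ℝ × ℝ)) ↔
        (s ≠ 0 ∧ s ≠ 2)) := by
  constructor
  · simp [legendreMatrix, Matrix.det_succ_row_zero, Fin.sum_univ_succ, Matrix.cons_val_succ]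
    norm_num [Fin.castSucc, Fin.castAdd, Fin.castLE]
    simp [show Fin.succAbove (3 : Fin 4) (2 : Fin 3) = 2 from by decide]
    ring
  · constructor
    · intro hb
      constructor
      · rintro rfl
        have := hb.1 (a₁ := (0, 0, 0, 0)) (a₂ := (0, 1, 1, 0)) (by norm_num)
        simp [Prod.ext_iff] at this
      · rintro rfl
        have := hb.1 (a₁ := (0, 0, 0, 0)) (a₂ := (0, 1, -1, 0)) (by norm_num)
        simp [Prod.ext_iff] at this
    · rintro ⟨h0, h2⟩
      have hd : s * (2 - s) ≠ 0 := by
        refine mul_ne_zero h0 (fun h => h2 ?_); linarith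
      rw [Function.bijective_iff_has_inverse]
      refine ⟨fun p => (-p.2.2.2 / s, ((1 - s) * p.2.1 + p.2.2.1) / (s * (2 - s)),
          (p.2.1 + (1 - s) * p.2.2.1) / (s * (2 - s)), -p.1 / s), ?_, ?_⟩
      · rintro ⟨a, b, c, d⟩
        simp only [Prod.mk.injEq]
        refine ⟨?_, ?_, ?_, ?_⟩ <;> field_simp <;> ring
      · rintro ⟨a, b, c, d⟩
        simp only [Prod.mk.injEq]
        refine ⟨?_, ?_, ?_, ?_⟩ <;> field_simp <;> ring
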